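/- arXiv:1508.02769 — 2 statements merged into one kernel-verified Lean document; each statement's English description precedes it below -/
import Mathlib

section
/- With h : ℂP^n → ℂ^{(n+1)²} defined by h([z])_{ij} = z_i z̄_j / Σ_l |z_l|², the image h(ℂP^n) is exactly the set S of matrices (w_{ij}) satisfying: w_{ij}w_{kl} = w_{il}w_{kj} for all i,j,k,l; Σ_i w_{ii} = 1; and w_{ij} = conjugate(w_{ji}) for all i,j. In particular, the image of ℂP^n is a real algebraic subset of ℝ^{2(n+1)²}. -/
open scoped ComplexConjugate

/-- The image of `h : ℂP^n → ℂ^{(n+1)²}`,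
`h([z])_{ij} = z_i z̄_j / Σ_l |z_l|²`, is exactly the real algebraic set `S` of
matrices `(w_{ij})` with `w_{ij}w_{kl} = w_{il}w_{kj}`, `Σ_i w_{ii} = 1`, and
`w_{ij} = conj(w_{ji})`. -/
theorem stmt12 (n : ℕ) :
    {w : Fin (n + 1) → Fin (n + 1) → ℂ |
        ∃ z : Fin (n + 1) → ℂ, z ≠ 0 ∧ ∀ i j : Fin (n + 1),
          w i j = z i * conj (z j) / ((∑ l, Complex.normSq (z l) : ℝ) : ℂ)}
      = {w : Fin (n + 1) → Fin (n + 1) → ℂ |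
          (∀ i j k l : Fin (n + 1), w i j * w k l = w i l * w k j)
            ∧ (∑ i, w i i) = 1
            ∧ (∀ i j : Fin (n + 1), w i j = conj (w j i))} := by
  ext w
  simp only [Set.mem_setOf_eq]
  constructor
  · rintro ⟨z, hz, hw⟩
    have hex : ∃ l, z l ≠ 0 := by
      by_contra h; push_neg at h; exact hz (funext h)
    obtain ⟨l0, hl0⟩ := hex
    have hc : (0 : ℝ) < ∑ l, Complex.normSq (z l) :=
      Finset.sum_pos' (fun i _ => Complex.normSq_nonneg _)
        ⟨l0, Finset.mem_univ l0, Complex.normSq_pos.mpr hl0⟩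
    have hc' : ((∑ l, Complex.normSq (z l) : ℝ) : ℂ) ≠ 0 := by
      exact_mod_cast hc.ne'
    refine ⟨fun i j k l => by simp only [hw]; field_simp, ?_, ?_⟩
    · rw [Finset.sum_congr rfl fun i _ => hw i i, ← Finset.sum_div,
        div_eq_one_iff_eq hc']
      push_cast
      exact Finset.sum_congr rfl fun i _ => Complex.mul_conj (z i)
    · intro i j
      simp only [hw, map_div₀, map_mul, Complex.conj_conj, Complex.conj_ofReal]
      ring
  · rintro ⟨hmul, htr, hherm⟩
    have hex : ∃ k, w k k ≠ 0 := by
      by_contra h; push_neg at h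
      rw [Finset.sum_congr rfl fun i _ => h i] at htr
      simp at htr
    obtain ⟨k, hk⟩ := hex
    refine ⟨fun i => w i k, ?_, ?_⟩
    · intro h0
      exact hk (by simpa using congrFun h0 k)
    · intro i j
      have hck : ((∑ l, Complex.normSq (w l k) : ℝ) : ℂ) = w k k := by
        push_cast
        calc ∑ l, (Complex.normSq (w l k) : ℂ)
            = ∑ l, w l k * conj (w l k) := by
              exact Finset.sum_congr rfl fun l _ => (Complex.mul_conj (w l k)).symm
          _ = ∑ l, w l l * w k k := by
              refine Finset.sum_congr rfl fun l _ => ?_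
              rw [← hherm k l, hmul]
          _ = w k k := by rw [← Finset.sum_mul, htr, one_mul]
      rw [hck, ← hherm k j, ← hmul i j k k]
      field_simp
end

section
/- Let w = (w_{ij}) ∈ ℂ^{(n+1)×(n+1)} satisfy w_{ij}w_{kl} = w_{il}w_{kj} for all indices, Σ_i w_{ii} = 1, and w_{ij} = conjugate(w_{ji}). Then there exists k with w_{kk} ≠ 0, and for any such k, setting z_i = w_{ik}, one has z_i z̄_j / (Σ_l |z_l|²) = w_{ij} for all i,j. -/
open scoped ComplexConjugate

/-- If `w ∈ ℂ^{(n+1)×(n+1)}` satisfies `w_{ij}w_{kl} = w_{il}w_{kj}`,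
`Σ_i w_{ii} = 1`, and `w_{ij} = conj(w_{ji})`, then some diagonal entry `w_{kk}` is
nonzero, and for any such `k`, the vector `z_i := w_{ik}` satisfies
`z_i z̄_j / Σ_l |z_l|² = w_{ij}` for all `i, j`. -/
theorem stmt13 (n : ℕ) (w : Fin (n + 1) → Fin (n + 1) → ℂ)
    (hrel : ∀ i j k l : Fin (n + 1), w i j * w k l = w i l * w k j)
    (htr : (∑ i, w i i) = 1)
    (hherm : ∀ i j : Fin (n + 1), w i j = conj (w j i)) :
    (∃ k, w k k ≠ 0) ∧
      ∀ k : Fin (n + 1), w k k ≠ 0 → ∀ i j : Fin (n + 1),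
        w i k * conj (w j k) / ((∑ l, Complex.normSq (w l k) : ℝ) : ℂ) = w i j := by
  refine ⟨?_, ?_⟩
  · by_contra h
    push_neg at h
    simp [h] at htr
  · intro k hk i j
    have hsum : ((∑ l, Complex.normSq (w l k) : ℝ) : ℂ) = w k k := by
      push_cast
      calc ∑ l, (Complex.normSq (w l k) : ℂ) = ∑ l, w l k * w k l := by
            refine Finset.sum_congr rfl fun l _ => ?_
            rw [Complex.normSq_eq_conj_mul_self, ← hherm k l]; ring
        _ = ∑ l, w l l * w k k := by simp_rw [hrel]
        _ = (∑ l, w l l) * w k k := by rw [Finset.sum_mul]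
        _ = w k k := by rw [htr, one_mul]
    rw [hsum, ← hherm k j, hrel i k k j, mul_div_assoc, div_self hk, mul_one]
end
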